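/- For the system ẋ = (A + u(t)B)x with A = Id + J, B = −Id + J, J = [[0,−2],[2,0]], and controls u : ℝ → [-1,1]: for every nonzero x ∈ ℝ² there exist t > 0 and a control u with φ(t, x, u) = e^{2t} x, and for every control u and t > 0, ‖φ(t,x,u)‖ ≤ e^{2t}‖x‖; hence ξ(x) = 2 for all nonzero x. -/

import Mathlib

open Real

lemma key_inner (u : ℝ) (v : EuclideanSpace ℝ (Fin 2)) :
    (inner ℝ v ((Matrix.toEuclideanLin
      (((1 : Matrix (Fin 2) (Fin 2) ℝ) + !![(0:ℝ), -2; 2, 0])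
        + u • ((-(1 : Matrix (Fin 2) (Fin 2) ℝ)) + !![(0:ℝ), -2; 2, 0]))) v) : ℝ)
      = (1 - u) * inner ℝ v v := by
  simp [Matrix.toEuclideanLin_apply, PiLp.inner_apply, Matrix.mulVec, dotProduct,
    Fin.sum_univ_two, Matrix.add_apply, Matrix.smul_apply, Matrix.one_apply, Matrix.neg_apply,
    Matrix.cons_val_zero, Matrix.cons_val_one, EuclideanSpace.norm_sq_eq]
  ring

lemma key_inner' (u : ℝ) (v : EuclideanSpace ℝ (Fin 2)) :
    (inner ℝ ((Matrix.toEuclideanLin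
      (((1 : Matrix (Fin 2) (Fin 2) ℝ) + !![(0:ℝ), -2; 2, 0])
        + u • ((-(1 : Matrix (Fin 2) (Fin 2) ℝ)) + !![(0:ℝ), -2; 2, 0]))) v) v : ℝ)
      = (1 - u) * inner ℝ v v := by
  rw [real_inner_comm]; exact key_inner u v

lemma key_apply (v : EuclideanSpace ℝ (Fin 2)) :
    (Matrix.toEuclideanLin
      (((1 : Matrix (Fin 2) (Fin 2) ℝ) + !![(0:ℝ), -2; 2, 0])
        + (-1:ℝ) • ((-(1 : Matrix (Fin 2) (Fin 2) ℝ)) + !![(0:ℝ), -2; 2, 0]))) v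
      = (2:ℝ) • v := by
  have h : ((1 : Matrix (Fin 2) (Fin 2) ℝ) + !![(0:ℝ), -2; 2, 0])
      + (-1:ℝ) • ((-(1 : Matrix (Fin 2) (Fin 2) ℝ)) + !![(0:ℝ), -2; 2, 0])
      = (2:ℝ) • (1 : Matrix (Fin 2) (Fin 2) ℝ) := by
    rw [neg_smul, one_smul]; ext i j; fin_cases i <;> fin_cases j <;>
      simp [Matrix.add_apply, Matrix.neg_apply, Matrix.one_apply, Matrix.smul_apply] <;> ring
  rw [h, map_smul]
  ext i
  simp [Matrix.toEuclideanLin_apply]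

theorem example2_xi_eq_two
    (x₀ : EuclideanSpace ℝ (Fin 2)) (hx₀ : x₀ ≠ 0) :
    (∃ t > (0:ℝ), ∃ u : ℝ → ℝ, (∀ s, u s ∈ Set.Icc (-1:ℝ) 1) ∧
      ∃ x : ℝ → EuclideanSpace ℝ (Fin 2), x 0 = x₀ ∧
        (∀ s : ℝ, HasDerivAt x
          (Matrix.toEuclideanLin
            (((1 : Matrix (Fin 2) (Fin 2) ℝ) + !![(0:ℝ), -2; 2, 0])
              + u s • ((-(1 : Matrix (Fin 2) (Fin 2) ℝ)) + !![(0:ℝ), -2; 2, 0])) (x s)) s) ∧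
        x t = Real.exp (2 * t) • x₀) ∧
    (∀ u : ℝ → ℝ, (∀ s, u s ∈ Set.Icc (-1:ℝ) 1) →
      ∀ x : ℝ → EuclideanSpace ℝ (Fin 2), x 0 = x₀ →
        (∀ s : ℝ, HasDerivAt x
          (Matrix.toEuclideanLin
            (((1 : Matrix (Fin 2) (Fin 2) ℝ) + !![(0:ℝ), -2; 2, 0])
              + u s • ((-(1 : Matrix (Fin 2) (Fin 2) ℝ)) + !![(0:ℝ), -2; 2, 0])) (x s)) s) →
        ∀ t : ℝ, 0 < t → ‖x t‖ ≤ Real.exp (2 * t) * ‖x₀‖) := by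
  constructor
  · -- existence: take u ≡ -1, x s = e^{2s} • x₀
    refine ⟨1, one_pos, fun _ => -1, fun s => ⟨le_refl _, by norm_num⟩,
      fun s => Real.exp (2 * s) • x₀, by simp, ?_, rfl⟩
    intro s
    have h1 : HasDerivAt (fun s : ℝ => Real.exp (2 * s)) (Real.exp (2 * s) * 2) s := by
      simpa using ((hasDerivAt_id s).const_mul 2).exp
    have h2 := h1.smul_const x₀
    refine h2.congr_deriv ?_
    rw [key_apply]
    rw [smul_smul]
    ring_nf
  · -- upper bound
    intro u hu x hx0 hode t ht
    set g : ℝ → ℝ := fun s => Real.exp (-4 * s) * inner ℝ (x s) (x s) with hg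
    have hderiv : ∀ s, HasDerivAt g
        (Real.exp (-4 * s) * ((-2) * (1 + u s)) * inner ℝ (x s) (x s)) s := by
      intro s
      have he : HasDerivAt (fun s : ℝ => Real.exp (-4 * s)) (Real.exp (-4 * s) * (-4)) s := by
        simpa using ((hasDerivAt_id s).const_mul (-4)).exp
      have hi : HasDerivAt (fun s => (inner ℝ (x s) (x s) : ℝ))
          ((2 * (1 - u s)) * inner ℝ (x s) (x s)) s := by
        have := (hode s).inner ℝ (hode s)
        rw [key_inner, key_inner'] at this
        refine this.congr_deriv ?_; ring
      have := he.mul hi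
      refine this.congr_deriv ?_
      ring
    have hanti : Antitone g := by
      apply antitone_of_deriv_nonpos
      · intro s; exact (hderiv s).differentiableAt
      · intro s
        rw [(hderiv s).deriv]
        have h1 : (0:ℝ) ≤ 1 + u s := by linarith [(hu s).1]
        have h2 : (0:ℝ) ≤ inner ℝ (x s) (x s) := real_inner_self_nonneg
        have h3 : (0:ℝ) ≤ Real.exp (-4 * s) := (Real.exp_pos _).le
        have := mul_nonneg (mul_nonneg h3 h1) h2
        nlinarith
    have hgt : g t ≤ g 0 := hanti ht.le
    have hg0 : g 0 = ‖x₀‖ ^ 2 := by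
      show Real.exp (-4 * 0) * inner ℝ (x 0) (x 0) = ‖x₀‖ ^ 2
      rw [hx0, real_inner_self_eq_norm_sq]; simp
    have hgT : g t = Real.exp (-4 * t) * ‖x t‖ ^ 2 := by
      show Real.exp (-4 * t) * inner ℝ (x t) (x t) = _
      rw [real_inner_self_eq_norm_sq]
    have hgt' : Real.exp (-4 * t) * ‖x t‖ ^ 2 ≤ ‖x₀‖ ^ 2 := by
      rw [← hg0, ← hgT]; exact hgt
    have hsq : ‖x t‖ ^ 2 ≤ (Real.exp (2 * t) * ‖x₀‖) ^ 2 := by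
      have hexp : Real.exp (-4 * t) * Real.exp (4 * t) = 1 := by
        rw [← Real.exp_add]; ring_nf; exact Real.exp_zero
      have h4 : (Real.exp (2 * t)) ^ 2 = Real.exp (4 * t) := by
        rw [← Real.exp_nat_mul]; ring_nf
      have hpos : (0:ℝ) < Real.exp (-4 * t) := Real.exp_pos _
      rw [mul_pow, h4]
      nlinarith [hgt', Real.exp_pos (4 * t)]
    have h5 : (0:ℝ) ≤ Real.exp (2 * t) * ‖x₀‖ := by positivity
    nlinarith [norm_nonneg (x t)]
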